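/- Noise bound for BFV relinearization (version 2): let n ≥ 1, q, p ≥ 2, work with polynomials of degree < n reduced modulo xⁿ+1, and let δ ≥ 0 be an expansion bound valid for polynomials with real coefficients modulo xⁿ+1. Suppose ‖h₂‖ ≤ q/2 and ‖e‖ ≤ B. Then the version-2 relinearization error err₂ = −(h₂·e)/p + (⌊(h₂·b)/p⌉ − (h₂·b)/p) + (⌊(h₂·a)/p⌉ − (h₂·a)/p)·s satisfies ‖err₂‖ ≤ (q·B·δ)/p + 1/2 + (δ/2)·‖s‖. -/

import Mathlib

open Polynomial

noncomputable def pnormR (n : ℕ) (f : Polynomial ℝ) : ℝ :=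
  ⨆ i : Fin n, |f.coeff (i : ℕ)|
noncomputable def roundPoly (f : Polynomial ℝ) : Polynomial ℝ :=
  f.sum fun i a => Polynomial.C ((round a : ℤ) : ℝ) * Polynomial.X ^ i
noncomputable def toR : Polynomial ℤ →+* Polynomial ℝ :=
  Polynomial.mapRingHom (Int.castRingHom ℝ)

lemma pnormR_bdd (n : ℕ) (f : Polynomial ℝ) :
    BddAbove (Set.range fun i : Fin n => |f.coeff (i:ℕ)|) :=
  (Set.finite_range _).bddAbove

lemma coeff_abs_le_pnormR (n : ℕ) (f : Polynomial ℝ) (i : Fin n) :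
    |f.coeff (i:ℕ)| ≤ pnormR n f := le_ciSup (pnormR_bdd n f) i

lemma pnormR_nonneg (n : ℕ) (hn : 1 ≤ n) (f : Polynomial ℝ) : 0 ≤ pnormR n f :=
  le_trans (abs_nonneg _) (coeff_abs_le_pnormR n f ⟨0, hn⟩)

lemma pnormR_le (n : ℕ) (hn : 1 ≤ n) (f : Polynomial ℝ) (c : ℝ)
    (h : ∀ i : Fin n, |f.coeff (i:ℕ)| ≤ c) : pnormR n f ≤ c := by
  have : Nonempty (Fin n) := ⟨⟨0, hn⟩⟩
  exact ciSup_le h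

lemma pnormR_add_le (n : ℕ) (hn : 1 ≤ n) (f g : Polynomial ℝ) :
    pnormR n (f + g) ≤ pnormR n f + pnormR n g := by
  refine pnormR_le n hn _ _ fun i => ?_
  rw [Polynomial.coeff_add]
  exact (abs_add_le _ _).trans (add_le_add (coeff_abs_le_pnormR n f i) (coeff_abs_le_pnormR n g i))

lemma pnormR_neg (n : ℕ) (f : Polynomial ℝ) : pnormR n (-f) = pnormR n f := by
  unfold pnormR; simp [abs_neg]

lemma pnormR_C_mul_le (n : ℕ) (hn : 1 ≤ n) (c : ℝ) (f : Polynomial ℝ) :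
    pnormR n (Polynomial.C c * f) ≤ |c| * pnormR n f := by
  refine pnormR_le n hn _ _ fun i => ?_
  rw [Polynomial.coeff_C_mul, abs_mul]
  exact mul_le_mul_of_nonneg_left (coeff_abs_le_pnormR n f i) (abs_nonneg c)

lemma roundPoly_coeff (f : Polynomial ℝ) (k : ℕ) :
    (roundPoly f).coeff k = ((round (f.coeff k) : ℤ) : ℝ) := by
  unfold roundPoly
  rw [Polynomial.sum_def]
  simp only [Polynomial.finset_sum_coeff, Polynomial.coeff_C_mul, Polynomial.coeff_X_pow]
  rw [Finset.sum_eq_single k]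
  · simp
  · intro b _ hb; simp [Ne.symm hb]
  · intro hk
    rw [Polynomial.mem_support_iff, not_not] at hk
    simp [hk]

lemma pnormR_round_sub (n : ℕ) (hn : 1 ≤ n) (f : Polynomial ℝ) :
    pnormR n (roundPoly f - f) ≤ 1 / 2 := by
  refine pnormR_le n hn _ _ fun i => ?_
  rw [Polynomial.coeff_sub, roundPoly_coeff, abs_sub_comm]
  exact abs_sub_round _

lemma roundPoly_degree_le (f : Polynomial ℝ) : (roundPoly f).degree ≤ f.degree := by
  unfold roundPoly
  rw [Polynomial.sum_def]
  refine (Polynomial.degree_sum_le _ _).trans (Finset.sup_le fun i hi => ?_)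
  refine (Polynomial.degree_mul_le _ _).trans ?_
  have h1 : (Polynomial.C ((round (f.coeff i) : ℤ) : ℝ)).degree ≤ 0 := Polynomial.degree_C_le
  have h2 : ((Polynomial.X : Polynomial ℝ) ^ i).degree ≤ i := Polynomial.degree_X_pow_le i
  calc _ ≤ 0 + (i : WithBot ℕ) := add_le_add h1 h2
    _ = (i : WithBot ℕ) := zero_add _
    _ ≤ f.degree := Polynomial.le_degree_of_ne_zero (Polynomial.mem_support_iff.mp hi)

lemma toR_degree_le (f : Polynomial ℤ) : (toR f).degree ≤ f.degree := by
  unfold toR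
  simpa using Polynomial.degree_map_le (p := f) (f := Int.castRingHom ℝ)
lemma degree_C_mul_lt {c : ℝ} {f : Polynomial ℝ} {m : WithBot ℕ} (h : f.degree < m) :
    (Polynomial.C c * f).degree < m := by
  refine lt_of_le_of_lt ?_ h
  calc (Polynomial.C c * f).degree ≤ (Polynomial.C c).degree + f.degree :=
        Polynomial.degree_mul_le _ _
    _ ≤ 0 + f.degree := add_le_add Polynomial.degree_C_le le_rfl
    _ = f.degree := zero_add _

/-- Noise bound for BFV relinearization (version 2): with `δ` an expansion bound
for polynomials with real coefficients modulo `xⁿ+1`, `‖h₂‖ ≤ q/2` and `‖e‖ ≤ B`,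
the relinearization error
`err₂ = -(h₂·e)/p + (⌊(h₂·b)/p⌉ - (h₂·b)/p) + (⌊(h₂·a)/p⌉ - (h₂·a)/p)·s`
(products reduced modulo `xⁿ+1`) satisfies
`‖err₂‖ ≤ (q·B·δ)/p + 1/2 + (δ/2)·‖s‖`. -/
theorem bfv_relinearization_v2_noise_bound (n : ℕ) (hn : 1 ≤ n) (q p : ℕ)
    (hq : 2 ≤ q) (hp : 2 ≤ p)
    (δ : ℝ) (hδ0 : 0 ≤ δ)
    (hδ : ∀ a b : Polynomial ℝ, a.degree < (n : WithBot ℕ) → b.degree < (n : WithBot ℕ) →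
      pnormR n ((a * b) %ₘ ((X : Polynomial ℝ) ^ n + 1)) ≤ δ * pnormR n a * pnormR n b)
    (h₂ e a b s : Polynomial ℤ) (B : ℝ)
    (hd₂ : h₂.degree < (n : WithBot ℕ)) (hde : e.degree < (n : WithBot ℕ))
    (hda : a.degree < (n : WithBot ℕ)) (hdb : b.degree < (n : WithBot ℕ))
    (hds : s.degree < (n : WithBot ℕ))
    (hn₂ : pnormR n (toR h₂) ≤ (q : ℝ) / 2) (hne : pnormR n (toR e) ≤ B)
    (Hb Ha err₂ : Polynomial ℝ)
    (hHb : Hb = Polynomial.C ((1 : ℝ) / (p : ℝ)) *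
      ((toR h₂ * toR b) %ₘ ((X : Polynomial ℝ) ^ n + 1)))
    (hHa : Ha = Polynomial.C ((1 : ℝ) / (p : ℝ)) *
      ((toR h₂ * toR a) %ₘ ((X : Polynomial ℝ) ^ n + 1)))
    (herr : err₂ = -(Polynomial.C ((1 : ℝ) / (p : ℝ)) *
        ((toR h₂ * toR e) %ₘ ((X : Polynomial ℝ) ^ n + 1)))
      + (roundPoly Hb - Hb)
      + ((roundPoly Ha - Ha) * toR s) %ₘ ((X : Polynomial ℝ) ^ n + 1)) :
    pnormR n err₂ ≤ (q : ℝ) * B * δ / (p : ℝ) + 1 / 2 + δ / 2 * pnormR n (toR s) := by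
  have hp0 : (0:ℝ) < (p:ℝ) := by exact_mod_cast (by omega : 0 < p)
  have hmonic : ((X : Polynomial ℝ) ^ n + 1).Monic := by
    have := Polynomial.monic_X_pow_add_C (R := ℝ) (a := 1) (by omega : n ≠ 0)
    simpa using this
  have hMdeg : ((X : Polynomial ℝ) ^ n + 1).degree = (n : WithBot ℕ) := by
    have := Polynomial.degree_X_pow_add_C (R := ℝ) (a := 1) (by omega : 0 < n)
    simpa using this
  have hmod : ∀ f : Polynomial ℝ,
      (f %ₘ ((X : Polynomial ℝ) ^ n + 1)).degree < (n : WithBot ℕ) := fun f => by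
    have := Polynomial.degree_modByMonic_lt f hmonic
    rwa [hMdeg] at this
  have dth2 := lt_of_le_of_lt (toR_degree_le h₂) hd₂
  have dte := lt_of_le_of_lt (toR_degree_le e) hde
  have dts := lt_of_le_of_lt (toR_degree_le s) hds
  have hHadeg : Ha.degree < (n : WithBot ℕ) := by
    rw [hHa]; exact degree_C_mul_lt (hmod _)
  have hRHa : (roundPoly Ha - Ha).degree < (n : WithBot ℕ) :=
    lt_of_le_of_lt (Polynomial.degree_sub_le _ _)
      (max_lt (lt_of_le_of_lt (roundPoly_degree_le Ha) hHadeg) hHadeg)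
  have hN2 := pnormR_nonneg n hn (toR h₂)
  have hNe := pnormR_nonneg n hn (toR e)
  have hNs := pnormR_nonneg n hn (toR s)
  have hNR := pnormR_nonneg n hn (roundPoly Ha - Ha)
  -- term 1
  have T1 : pnormR n (-(Polynomial.C ((1 : ℝ) / (p : ℝ)) *
        ((toR h₂ * toR e) %ₘ ((X : Polynomial ℝ) ^ n + 1))))
      ≤ (q : ℝ) * B * δ / (p : ℝ) := by
    rw [pnormR_neg]
    refine (pnormR_C_mul_le n hn _ _).trans ?_
    have h1 := hδ (toR h₂) (toR e) dth2 dte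
    have habs : |(1:ℝ)/(p:ℝ)| = 1/(p:ℝ) := abs_of_pos (by positivity)
    rw [habs]
    have hB : 0 ≤ B := hNe.trans hne
    have hq0 : (0:ℝ) ≤ (q:ℝ) := Nat.cast_nonneg q
    have h2 : δ * pnormR n (toR h₂) * pnormR n (toR e) ≤ (q:ℝ) * B * δ := by
      have hm : pnormR n (toR h₂) * pnormR n (toR e) ≤ (q:ℝ)/2 * B :=
        mul_le_mul hn₂ hne hNe (by positivity)
      nlinarith [mul_le_mul_of_nonneg_left hm hδ0,
        mul_nonneg (mul_nonneg hq0 hB) hδ0]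
    calc 1/(p:ℝ) * pnormR n ((toR h₂ * toR e) %ₘ ((X : Polynomial ℝ) ^ n + 1))
        ≤ 1/(p:ℝ) * ((q:ℝ) * B * δ) := by
          refine mul_le_mul_of_nonneg_left (h1.trans h2) (by positivity)
      _ = (q:ℝ) * B * δ / (p:ℝ) := by ring
  have T2 : pnormR n (roundPoly Hb - Hb) ≤ 1/2 := pnormR_round_sub n hn Hb
  have T3 : pnormR n (((roundPoly Ha - Ha) * toR s) %ₘ ((X : Polynomial ℝ) ^ n + 1))
      ≤ δ / 2 * pnormR n (toR s) := by
    refine (hδ _ _ hRHa dts).trans ?_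
    have h12 := pnormR_round_sub n hn Ha
    nlinarith [mul_le_mul_of_nonneg_right (mul_le_mul_of_nonneg_left h12 hδ0) hNs]
  calc pnormR n err₂ ≤ _ := by
        rw [herr]
        exact (pnormR_add_le n hn _ _).trans (add_le_add (pnormR_add_le n hn _ _) le_rfl)
    _ ≤ (q : ℝ) * B * δ / (p : ℝ) + 1 / 2 + δ / 2 * pnormR n (toR s) :=
        add_le_add (add_le_add T1 T2) T3
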